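/- Let R be a commutative ring and S a multiplicative subset of R. Then the following statements are equivalent: (1) every u-S-quasi-projective R-module is u-S-projective; (2) every direct sum of two u-S-quasi-projective R-modules is u-S-projective; (3) every direct sum of two u-S-quasi-projective R-modules is u-S-quasi-projective. -/

import Mathlib

/-!  Definitions for uniformly-S-pseudo-projective modules
(M. Adarbeh, M. Saleh, "Uniformly-S-pseudo-projective modules"). -/

universe u v w

/-- `S` is a multiplicative subset of the commutative ring `R`:
`1 ∈ S`, `0 ∉ S`, and `S` is closed under multiplication. -/
def IsMultSubset {R : Type u} [CommRing R] (S : Set R) : Prop :=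
  1 ∈ S ∧ (0 : R) ∉ S ∧ ∀ ⦃a b : R⦄, a ∈ S → b ∈ S → a * b ∈ S

/-- An `R`-module `T` is `u`-`S`-torsion if some `s ∈ S` annihilates it. -/
def IsUSTorsion {R : Type u} [CommRing R] (S : Set R) (T : Type v) [AddCommGroup T]
    [Module R T] : Prop :=
  ∃ s ∈ S, ∀ t : T, s • t = 0

/-- `f` is a `u`-`S`-monomorphism: its kernel is `u`-`S`-torsion. -/
def IsUSMono {R : Type u} [CommRing R] (S : Set R) {M : Type v} {N : Type w}
    [AddCommGroup M] [Module R M] [AddCommGroup N] [Module R N] (f : M →ₗ[R] N) : Prop :=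
  ∃ s ∈ S, ∀ m ∈ LinearMap.ker f, s • m = (0 : M)

/-- `f` is a `u`-`S`-epimorphism: its cokernel is `u`-`S`-torsion. -/
def IsUSEpi {R : Type u} [CommRing R] (S : Set R) {M : Type v} {N : Type w}
    [AddCommGroup M] [Module R M] [AddCommGroup N] [Module R N] (f : M →ₗ[R] N) : Prop :=
  ∃ s ∈ S, ∀ n : N, s • n ∈ LinearMap.range f

/-- `f` is a `u`-`S`-isomorphism: both a `u`-`S`-monomorphism and a `u`-`S`-epimorphism. -/
def IsUSIso {R : Type u} [CommRing R] (S : Set R) {M : Type v} {N : Type w}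
    [AddCommGroup M] [Module R M] [AddCommGroup N] [Module R N] (f : M →ₗ[R] N) : Prop :=
  IsUSMono S f ∧ IsUSEpi S f

/-- `P` is `u`-`S`-pseudo-projective: for every submodule `K` of `P` there is `s ∈ S` such that
every `u`-`S`-epimorphism `f : P → P/K` satisfies `s • f = π_K ∘ g` for some endomorphism
`g` of `P`. -/
def IsUSPseudoProjective {R : Type u} [CommRing R] (S : Set R) (P : Type v)
    [AddCommGroup P] [Module R P] : Prop :=
  ∀ K : Submodule R P, ∃ s ∈ S, ∀ f : P →ₗ[R] P ⧸ K, IsUSEpi S f →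
    ∃ g : P →ₗ[R] P, s • f = K.mkQ.comp g

/-- `M` is `u`-`S`-quasi-projective. -/
def IsUSQuasiProjective {R : Type u} [CommRing R] (S : Set R) (M : Type v)
    [AddCommGroup M] [Module R M] : Prop :=
  ∀ K : Submodule R M, ∃ s ∈ S, ∀ f : M →ₗ[R] M ⧸ K,
    ∃ g : M →ₗ[R] M, s • f = K.mkQ.comp g

/-- `Q` is `u`-`S`-projective (test modules in `Type v₁`). -/
def IsUSProjective.{u₁, v₁, w₁} {R : Type u₁} [CommRing R] (S : Set R) (Q : Type w₁)
    [AddCommGroup Q] [Module R Q] : Prop :=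
  ∀ (B C : Type v₁) [AddCommGroup B] [AddCommGroup C] [Module R B] [Module R C]
    (g : B →ₗ[R] C), IsUSEpi S g →
      ∃ s ∈ S, ∀ h : Q →ₗ[R] C, ∃ h' : Q →ₗ[R] B, s • h = g.comp h'

/-- `M` is `u`-`S`-injective (test modules in `Type v₁`). -/
def IsUSInjective.{u₁, v₁, w₁} {R : Type u₁} [CommRing R] (S : Set R) (M : Type w₁)
    [AddCommGroup M] [Module R M] : Prop :=
  ∀ (A B : Type v₁) [AddCommGroup A] [AddCommGroup B] [Module R A] [Module R B]
    (f : A →ₗ[R] B), IsUSMono S f →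
      ∃ s ∈ S, ∀ h : A →ₗ[R] M, ∃ h' : B →ₗ[R] M, s • h = h'.comp f

/-- `E` is `u`-`S`-pseudo-injective. -/
def IsUSPseudoInjective {R : Type u} [CommRing R] (S : Set R) (E : Type v)
    [AddCommGroup E] [Module R E] : Prop :=
  ∀ K : Submodule R E, ∃ s ∈ S, ∀ f : ↥K →ₗ[R] E, IsUSMono S f →
    ∃ g : E →ₗ[R] E, g.comp K.subtype = s • f

/-- The sequence `0 → A →f B →g C → 0` is short `u`-`S`-exact. -/
def IsShortUSExact {R : Type u} [CommRing R] (S : Set R) {A B C : Type v}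
    [AddCommGroup A] [Module R A] [AddCommGroup B] [Module R B] [AddCommGroup C] [Module R C]
    (f : A →ₗ[R] B) (g : B →ₗ[R] C) : Prop :=
  IsUSMono S f ∧ IsUSEpi S g ∧
    ∃ s ∈ S, (∀ x ∈ LinearMap.ker g, s • x ∈ LinearMap.range f) ∧
      (∀ x ∈ LinearMap.range f, s • x ∈ LinearMap.ker g)

/-- The short `u`-`S`-exact sequence `0 → A →f B →g C → 0` is `u`-`S`-split:
some multiple `s • 1_A` of the identity factors back through `f`. -/
def IsUSSplitSeq {R : Type u} [CommRing R] (S : Set R) {A B : Type v}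
    [AddCommGroup A] [Module R A] [AddCommGroup B] [Module R B] (f : A →ₗ[R] B) : Prop :=
  ∃ s ∈ S, ∃ f' : B →ₗ[R] A, f'.comp f = s • (LinearMap.id : A →ₗ[R] A)

/-- `M` is a `u`-`S`-semisimple module (test sequences with modules in `Type v₁`). -/
def IsUSSemisimpleModule.{u₁, v₁} {R : Type u₁} [CommRing R] (S : Set R) (M : Type v₁)
    [AddCommGroup M] [Module R M] : Prop :=
  ∀ (A C : Type v₁) [AddCommGroup A] [AddCommGroup C] [Module R A] [Module R C]
    (f : A →ₗ[R] M) (g : M →ₗ[R] C), IsShortUSExact S f g → IsUSSplitSeq S f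

/-- `R` is a `u`-`S`-semisimple ring: every free `R`-module is `u`-`S`-semisimple. -/
def IsUSSemisimpleRing.{u₁, v₁} {R : Type u₁} [CommRing R] (S : Set R) : Prop :=
  ∀ (F : Type v₁) [AddCommGroup F] [Module R F], Module.Free R F →
    IsUSSemisimpleModule.{u₁, v₁} S F

/-- A submodule `N` of `M` is a `u`-`S`-direct summand of `M` if there is an `R`-module `N'`
and a `u`-`S`-isomorphism between `M` and `N ⊕ N'`. -/
def IsUSDirectSummand {R : Type u} [CommRing R] (S : Set R) {M : Type v}
    [AddCommGroup M] [Module R M] (N : Submodule R M) : Prop :=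
  ∃ (N' : ModuleCat.{v} R) (h : M →ₗ[R] (↥N × ↥N')), IsUSIso S h

/-- `A` is `u`-`S`-projective relative to `B`. -/
def IsUSProjectiveRel {R : Type u} [CommRing R] (S : Set R) (A : Type v) (B : Type w)
    [AddCommGroup A] [Module R A] [AddCommGroup B] [Module R B] : Prop :=
  ∀ K : Submodule R B, ∃ s ∈ S, ∀ f : A →ₗ[R] B ⧸ K,
    ∃ h : A →ₗ[R] B, s • f = K.mkQ.comp h

section Helpers

open Submodule LinearMap

variable {R : Type u} [CommRing R] {S : Set R}

/-- Exact lifting property: every map to a quotient of `F` lifts on the nose. -/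
private def ExactLift (R : Type u) [CommRing R] (F : Type w) [AddCommGroup F]
    [Module R F] : Prop :=
  ∀ (K : Submodule R F) (f : F →ₗ[R] F ⧸ K), ∃ g : F →ₗ[R] F, f = K.mkQ.comp g

private theorem uSQP_of_exactLift {F : Type w} [AddCommGroup F] [Module R F]
    (hS : IsMultSubset S) (h : ExactLift R F) : IsUSQuasiProjective S F := by
  intro K
  refine ⟨1, hS.1, fun f => ?_⟩
  obtain ⟨g, hg⟩ := h K f
  exact ⟨g, by rw [one_smul, hg]⟩

private theorem exactLift_transport {N : Type v} {F : Type w} [AddCommGroup N] [Module R N]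
    [AddCommGroup F] [Module R F] (e : N ≃ₗ[R] F) (hF : ExactLift R F) : ExactLift R N := by
  intro K f
  set K' : Submodule R F := K.map (e : N →ₗ[R] F) with hK'
  set eq : (N ⧸ K) ≃ₗ[R] F ⧸ K' := Submodule.Quotient.equiv K K' e rfl with heq
  obtain ⟨g', hg'⟩ := hF K' (eq.toLinearMap.comp (f.comp e.symm.toLinearMap))
  refine ⟨(e.symm.toLinearMap.comp g').comp e.toLinearMap, ?_⟩
  ext n
  have h1 : eq (f n) = K'.mkQ (g' (e n)) := by
    have := LinearMap.congr_fun hg' (e n)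
    simpa using this
  have h2 : ∀ x : F, eq.symm (K'.mkQ x) = K.mkQ (e.symm x) := by
    intro x
    apply eq.injective
    rw [eq.apply_symm_apply]
    show _ = eq (Submodule.Quotient.mk (e.symm x))
    rw [heq]
    simp [Submodule.Quotient.equiv, Submodule.mapQ_apply, Submodule.mkQ_apply]
  have := congrArg eq.symm h1
  rw [eq.symm_apply_apply, h2] at this
  simpa using this

private theorem exactLift_finsuppQuot {I : Ideal R} {ι : Type w} :
    ExactLift R (ι →₀ R ⧸ I) := by
  intro K f
  have hann : ∀ (r : R), r ∈ I → ∀ q : R ⧸ I, r • q = 0 := by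
    intro r hr q
    obtain ⟨a, rfl⟩ := Submodule.Quotient.mk_surjective I q
    rw [← Submodule.Quotient.mk_smul, smul_eq_mul]
    exact (Submodule.Quotient.mk_eq_zero I).mpr (I.mul_mem_right a hr)
  choose x hx using fun i : ι =>
    Submodule.Quotient.mk_surjective K (f (Finsupp.single i (Submodule.Quotient.mk 1)))
  refine ⟨Finsupp.lsum ℕ (fun i => I.liftQ (LinearMap.toSpanSingleton R _ (x i)) ?_), ?_⟩
  · intro r hr
    rw [LinearMap.mem_ker, LinearMap.toSpanSingleton_apply]
    ext i'
    simp [hann r hr]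
  · apply Finsupp.lhom_ext
    intro i q
    obtain ⟨a, rfl⟩ := Submodule.Quotient.mk_surjective I q
    have h1 : Finsupp.single i (Submodule.Quotient.mk a : R ⧸ I)
        = a • Finsupp.single i (Submodule.Quotient.mk (1 : R)) := by
      rw [Finsupp.smul_single, ← Submodule.Quotient.mk_smul, smul_eq_mul, mul_one]
    rw [h1, map_smul, map_smul]
    congr 1
    rw [← hx i, LinearMap.comp_apply, Finsupp.lsum_single, Submodule.liftQ_apply,
      LinearMap.toSpanSingleton_apply, one_smul, Submodule.mkQ_apply]

/-- Relative projectivity yields uniform lifting over `u`-`S`-epimorphisms. -/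
private theorem lift_of_rel {M : Type v} {B : Type w} {C : Type x}
    [AddCommGroup M] [Module R M] [AddCommGroup B] [Module R B] [AddCommGroup C] [Module R C]
    (hS : IsMultSubset S) (hrel : IsUSProjectiveRel S M B)
    (g : B →ₗ[R] C) (hg : IsUSEpi S g) :
    ∃ s ∈ S, ∀ h : M →ₗ[R] C, ∃ h' : M →ₗ[R] B, s • h = g.comp h' := by
  obtain ⟨t, htS, ht⟩ := hg
  obtain ⟨s, hsS, hs⟩ := hrel (LinearMap.ker g)
  set K := LinearMap.ker g with hK
  set g' : (B ⧸ K) →ₗ[R] C := K.liftQ g (le_refl _) with hg'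
  have hinj : Function.Injective g' := by
    rw [← LinearMap.ker_eq_bot]
    exact Submodule.ker_liftQ_eq_bot _ _ _ (le_refl _)
  set e : (B ⧸ K) ≃ₗ[R] LinearMap.range g' := LinearEquiv.ofInjective g' hinj with he
  have key : ∀ y : LinearMap.range g', g' (e.symm y) = (y : C) := by
    intro y
    conv_rhs => rw [← e.apply_symm_apply y]
    rw [he, LinearEquiv.ofInjective_apply]
  refine ⟨s * t, hS.2.2 hsS htS, fun h => ?_⟩
  have hmem : ∀ m : M, (t • h) m ∈ LinearMap.range g' := by
    intro m
    rw [Submodule.range_liftQ, LinearMap.smul_apply]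
    exact ht (h m)
  set h₁ : M →ₗ[R] B ⧸ K :=
    e.symm.toLinearMap.comp ((t • h).codRestrict (LinearMap.range g') hmem) with hh₁
  have hgh₁ : ∀ m, g' (h₁ m) = t • h m := by
    intro m
    rw [hh₁]
    show g' (e.symm ⟨(t • h) m, hmem m⟩) = t • h m
    rw [key]
    simp
  obtain ⟨h', hh'⟩ := hs h₁
  refine ⟨h', ?_⟩
  ext m
  have h3 : s • h₁ m = K.mkQ (h' m) := by
    have := LinearMap.congr_fun hh' m
    simpa using this
  have h4 : g' (K.mkQ (h' m)) = g (h' m) := by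
    rw [Submodule.mkQ_apply, hg', Submodule.liftQ_apply]
  calc ((s * t) • h) m = s • (t • h m) := by rw [LinearMap.smul_apply, mul_smul]
    _ = s • g' (h₁ m) := by rw [hgh₁ m]
    _ = g' (s • h₁ m) := (map_smul g' s _).symm
    _ = g' (K.mkQ (h' m)) := by rw [h3]
    _ = g (h' m) := h4
    _ = (g.comp h') m := rfl

/-- If `M × N` is `u`-`S`-quasi-projective, then `M` is `u`-`S`-projective relative to `N`. -/
private theorem rel_of_prod_qp {M N : Type v}
    [AddCommGroup M] [Module R M] [AddCommGroup N] [Module R N]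
    (hqp : IsUSQuasiProjective S (M × N)) : IsUSProjectiveRel S M N := by
  intro K
  set L : Submodule R (M × N) := (⊥ : Submodule R M).prod K with hL
  obtain ⟨s, hsS, hs⟩ := hqp L
  refine ⟨s, hsS, fun f₀ => ?_⟩
  set q : (M × N) →ₗ[R] M × (N ⧸ K) :=
    (LinearMap.fst R M N).prod (K.mkQ.comp (LinearMap.snd R M N)) with hq
  set β : (N ⧸ K) →ₗ[R] (M × N) ⧸ L :=
    K.liftQ (L.mkQ.comp (LinearMap.inr R M N)) (by
      intro n hn
      rw [LinearMap.mem_ker, LinearMap.comp_apply, LinearMap.inr_apply, Submodule.mkQ_apply,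
        Submodule.Quotient.mk_eq_zero]
      exact ⟨Submodule.zero_mem _, hn⟩) with hβ
  set u : ((M × N) ⧸ L) →ₗ[R] M × (N ⧸ K) := L.liftQ q (by
      rintro ⟨m, n⟩ ⟨hm, hn⟩
      rw [LinearMap.mem_ker]
      have hm0 : m = 0 := hm
      rw [hq]
      refine Prod.ext ?_ ?_
      · simpa using hm0
      · simpa [Submodule.Quotient.mk_eq_zero] using hn) with hu
  have hub : ∀ y : N ⧸ K, u (β y) = (0, y) := by
    intro y
    obtain ⟨n, rfl⟩ := Submodule.Quotient.mk_surjective K y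
    rw [hβ, Submodule.liftQ_apply, LinearMap.comp_apply, hu, Submodule.mkQ_apply,
      Submodule.liftQ_apply, hq]
    simp
  obtain ⟨g, hg⟩ := hs (β.comp (f₀.comp (LinearMap.fst R M N)))
  refine ⟨(LinearMap.snd R M N).comp (g.comp (LinearMap.inl R M N)), ?_⟩
  ext m
  have h1 := congrArg u (LinearMap.congr_fun hg (m, (0 : N)))
  rw [LinearMap.smul_apply, LinearMap.comp_apply, LinearMap.comp_apply, map_smul,
    LinearMap.fst_apply, hub, LinearMap.comp_apply, Submodule.mkQ_apply, hu,
    Submodule.liftQ_apply] at h1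
  have h2 := congrArg Prod.snd h1
  simp only [Prod.smul_snd, hq, LinearMap.prod_apply, LinearMap.pi_apply,
    LinearMap.comp_apply, LinearMap.snd_apply, Pi.prod] at h2
  simpa using h2

private theorem prod_proj {M N : Type v}
    [AddCommGroup M] [Module R M] [AddCommGroup N] [Module R N]
    (hS : IsMultSubset S) (hM : IsUSProjective.{u, v, v} S M)
    (hN : IsUSProjective.{u, v, v} S N) : IsUSProjective.{u, v, v} S (M × N) := by
  intro B C _ _ _ _ g hg
  obtain ⟨s₁, hs₁S, hs₁⟩ := hM B C g hg
  obtain ⟨s₂, hs₂S, hs₂⟩ := hN B C g hg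
  refine ⟨s₁ * s₂, hS.2.2 hs₁S hs₂S, fun h => ?_⟩
  obtain ⟨h₁, hh₁⟩ := hs₁ (h.comp (LinearMap.inl R M N))
  obtain ⟨h₂, hh₂⟩ := hs₂ (h.comp (LinearMap.inr R M N))
  refine ⟨(s₂ • h₁).coprod (s₁ • h₂), ?_⟩
  apply LinearMap.ext
  rintro ⟨m, n⟩
  have e₁ := LinearMap.congr_fun hh₁ m
  have e₂ := LinearMap.congr_fun hh₂ n
  simp only [LinearMap.smul_apply, LinearMap.comp_apply, LinearMap.inl_apply,
    LinearMap.inr_apply] at e₁ e₂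
  have hsplit : ((m, n) : M × N) = (m, 0) + (0, n) := by simp
  calc ((s₁ * s₂) • h) (m, n) = (s₁ * s₂) • (h (m, 0) + h (0, n)) := by
        rw [LinearMap.smul_apply, hsplit, map_add]
    _ = s₂ • (s₁ • h (m, 0)) + s₁ • (s₂ • h (0, n)) := by
        rw [smul_add, smul_smul, smul_smul, mul_comm s₂ s₁]
    _ = s₂ • g (h₁ m) + s₁ • g (h₂ n) := by rw [e₁, e₂]
    _ = g (s₂ • h₁ m + s₁ • h₂ n) := by rw [map_add, map_smul, map_smul]
    _ = (g.comp ((s₂ • h₁).coprod (s₁ • h₂))) (m, n) := by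
        simp [LinearMap.coprod_apply]

private theorem proj_of_prod_proj {M N : Type v}
    [AddCommGroup M] [Module R M] [AddCommGroup N] [Module R N]
    (h : IsUSProjective.{u, v, v} S (M × N)) : IsUSProjective.{u, v, v} S M := by
  intro B C _ _ _ _ g hg
  obtain ⟨s, hsS, hs⟩ := h B C g hg
  refine ⟨s, hsS, fun h₀ => ?_⟩
  obtain ⟨h', hh'⟩ := hs (h₀.comp (LinearMap.fst R M N))
  refine ⟨h'.comp (LinearMap.inl R M N), ?_⟩
  ext m
  have := LinearMap.congr_fun hh' (m, (0 : N))
  simpa using this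

private theorem qp_of_proj {M : Type v} [AddCommGroup M] [Module R M]
    (hS : IsMultSubset S) (h : IsUSProjective.{u, v, v} S M) :
    IsUSQuasiProjective S M := by
  intro K
  have hepi : IsUSEpi S K.mkQ := by
    refine ⟨1, hS.1, fun x => ?_⟩
    obtain ⟨m, rfl⟩ := Submodule.Quotient.mk_surjective K x
    exact ⟨m, by simp⟩
  obtain ⟨s, hsS, hs⟩ := h M (M ⧸ K) K.mkQ hepi
  exact ⟨s, hsS, hs⟩

private theorem punit_qp (hS : IsMultSubset S) :
    IsUSQuasiProjective S PUnit.{v + 1} := by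
  intro K
  refine ⟨1, hS.1, fun f => ⟨0, ?_⟩⟩
  ext x
  rw [Subsingleton.elim x 0]
  simp
  exact (congrArg f (Subsingleton.elim _ 0)).trans (map_zero f)

/-- Every module admits a surjection from a `u`-`S`-quasi-projective module in the same
universe. -/
private theorem exists_qp_cover (hS : IsMultSubset S) (B : Type v)
    [AddCommGroup B] [Module R B] :
    ∃ (N : Type v) (_ : AddCommGroup N) (_ : Module R N),
      IsUSQuasiProjective S N ∧ ∃ q : N →ₗ[R] B, Function.Surjective q := by
  classical
  set I : Ideal R := Module.annihilator R B with hI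
  have hIle : I ≤ LinearMap.ker (LinearMap.lsmul R B) := by
    intro r hr
    rw [LinearMap.mem_ker]
    ext b
    exact Module.mem_annihilator.mp hr b
  haveI hsmallQ : Small.{v} (R ⧸ I) := by
    refine small_of_injective (f := I.liftQ (LinearMap.lsmul R B) hIle) ?_
    rw [← LinearMap.ker_eq_bot]
    apply Submodule.ker_liftQ_eq_bot
    intro r hr
    rw [LinearMap.mem_ker] at hr
    exact Module.mem_annihilator.mpr fun b => LinearMap.congr_fun hr b
  haveI hsmallF : Small.{v} (B →₀ R ⧸ I) :=
    small_of_injective (f := fun f => (f : B → R ⧸ I)) (DFunLike.coe_injective : Function.Injective (fun (f : B →₀ R ⧸ I) => (f : B → R ⧸ I)))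
  refine ⟨Shrink.{v} (B →₀ R ⧸ I), inferInstance, inferInstance, ?_, ?_⟩
  · exact uSQP_of_exactLift hS
      (exactLift_transport (Shrink.linearEquiv R (B →₀ R ⧸ I)) exactLift_finsuppQuot)
  · set pF : (B →₀ R ⧸ I) →ₗ[R] B :=
      Finsupp.lsum ℕ (fun b => I.liftQ (LinearMap.toSpanSingleton R B b) (by
        intro r hr
        rw [LinearMap.mem_ker, LinearMap.toSpanSingleton_apply]
        exact Module.mem_annihilator.mp hr b)) with hpF
    refine ⟨pF.comp (Shrink.linearEquiv R (B →₀ R ⧸ I)).toLinearMap, ?_⟩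
    have hpFsurj : Function.Surjective pF := by
      intro b
      refine ⟨Finsupp.single b (Submodule.Quotient.mk 1), ?_⟩
      rw [hpF, Finsupp.lsum_single, Submodule.liftQ_apply, LinearMap.toSpanSingleton_apply,
        one_smul]
    exact hpFsurj.comp (Shrink.linearEquiv R (B →₀ R ⧸ I)).surjective

end Helpers


/-- The following are equivalent: (1) every `u`-`S`-quasi-projective module is
`u`-`S`-projective; (2) every direct sum of two `u`-`S`-quasi-projective modules is
`u`-`S`-projective; (3) every direct sum of two `u`-`S`-quasi-projective modules is
`u`-`S`-quasi-projective. -/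
theorem uSQuasiProjective_tfae
    {R : Type u} [CommRing R] (S : Set R) (hS : IsMultSubset S) :
    ((∀ (M : Type v) [AddCommGroup M] [Module R M],
        IsUSQuasiProjective S M → IsUSProjective.{u, v, v} S M) ↔
      (∀ (M N : Type v) [AddCommGroup M] [Module R M] [AddCommGroup N] [Module R N],
        IsUSQuasiProjective S M → IsUSQuasiProjective S N →
          IsUSProjective.{u, v, v} S (M × N))) ∧
    ((∀ (M : Type v) [AddCommGroup M] [Module R M],
        IsUSQuasiProjective S M → IsUSProjective.{u, v, v} S M) ↔
      (∀ (M N : Type v) [AddCommGroup M] [Module R M] [AddCommGroup N] [Module R N],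
        IsUSQuasiProjective S M → IsUSQuasiProjective S N →
          IsUSQuasiProjective S (M × N))) := by
  have hCtoA : (∀ (M N : Type v) [AddCommGroup M] [Module R M] [AddCommGroup N] [Module R N],
        IsUSQuasiProjective S M → IsUSQuasiProjective S N →
          IsUSQuasiProjective S (M × N)) →
      (∀ (M : Type v) [AddCommGroup M] [Module R M],
        IsUSQuasiProjective S M → IsUSProjective.{u, v, v} S M) := by
    intro hC M _ _ hM
    intro B C _ _ _ _ g hg
    obtain ⟨N, _, _, hNqp, q, hq⟩ := exists_qp_cover hS B
    have hrelN : IsUSProjectiveRel S M N := rel_of_prod_qp (hC M N hM hNqp)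
    have hrelB : IsUSProjectiveRel S M B := by
      intro K
      have hepi : IsUSEpi S (K.mkQ.comp q) := by
        refine ⟨1, hS.1, fun x => ?_⟩
        obtain ⟨b, rfl⟩ := Submodule.Quotient.mk_surjective K x
        obtain ⟨n, rfl⟩ := hq b
        exact ⟨n, by simp⟩
      obtain ⟨s, hsS, hs⟩ := lift_of_rel hS hrelN (K.mkQ.comp q) hepi
      refine ⟨s, hsS, fun f => ?_⟩
      obtain ⟨h', hh'⟩ := hs f
      exact ⟨q.comp h', by rw [hh', LinearMap.comp_assoc]⟩
    exact lift_of_rel hS hrelB g hg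
  constructor
  · constructor
    · intro hA M N _ _ _ _ hM hN
      exact prod_proj hS (hA M hM) (hA N hN)
    · intro hB M _ _ hM
      exact proj_of_prod_proj (hB M PUnit.{v + 1} hM (punit_qp hS))
  · constructor
    · intro hA M N _ _ _ _ hM hN
      exact qp_of_proj hS (prod_proj hS (hA M hM) (hA N hN))
    · exact hCtoA
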